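/- arXiv:1011.1427 — 2 statements merged into one kernel-verified Lean document; each statement's English description precedes it below -/
import Mathlib

section
/- Let r ≥ 1 and let W be a ℂ-subspace of R^r with W ⊆ q⁻¹·P^r for a nonzero polynomial q. If p₁ and p₂ are nonzero polynomials with p₁·P^r ⊆ W and p₂·P^r ⊆ W, then the quotients W ⧸ p₁·P^r and W ⧸ p₂·P^r are finite-dimensional and finrank ℂ (W ⧸ p₁·P^r) − r·natDegree p₁ = finrank ℂ (W ⧸ p₂·P^r) − r·natDegree p₂; that is, the virtual dimension of W does not depend on the choice of p. -/
open Polynomial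

/-- The componentwise embedding `P^r → R^r` of tuples of polynomials into
tuples of rational functions. -/
noncomputable def polyToRat (r : ℕ) :
    (Fin r → Polynomial ℂ) →ₗ[ℂ] (Fin r → RatFunc ℂ) :=
  LinearMap.pi fun k =>
    (IsScalarTower.toAlgHom ℂ (Polynomial ℂ) (RatFunc ℂ)).toLinearMap ∘ₗ
      LinearMap.proj k

/-- Componentwise multiplication by a fixed rational function `f` on `R^r`. -/
noncomputable def ratScale (r : ℕ) (f : RatFunc ℂ) :
    (Fin r → RatFunc ℂ) →ₗ[ℂ] (Fin r → RatFunc ℂ) :=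
  LinearMap.pi fun k => LinearMap.mulLeft ℂ f ∘ₗ LinearMap.proj k

/-- `P^r` regarded as a subspace of `R^r`. -/
noncomputable def polySubmodule (r : ℕ) : Submodule ℂ (Fin r → RatFunc ℂ) :=
  LinearMap.range (polyToRat r)

/-- The image `f·U` of a subspace `U ⊆ R^r` under componentwise
multiplication by the rational function `f`. -/
noncomputable def scaleSub (r : ℕ) (f : RatFunc ℂ)
    (U : Submodule ℂ (Fin r → RatFunc ℂ)) : Submodule ℂ (Fin r → RatFunc ℂ) :=
  Submodule.map (ratScale r f) U

section VdimAux

open Module Submodule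

private lemma ratScale_apply (r : ℕ) (f : RatFunc ℂ) (v : Fin r → RatFunc ℂ) (k : Fin r) :
    ratScale r f v k = f * v k := rfl

private lemma ratScale_mul (r : ℕ) (f g : RatFunc ℂ) :
    ratScale r (f * g) = ratScale r f ∘ₗ ratScale r g :=
  LinearMap.ext fun v => funext fun k => mul_assoc f g (v k)

private lemma ratScale_one (r : ℕ) : ratScale r (1 : RatFunc ℂ) = LinearMap.id :=
  LinearMap.ext fun v => funext fun k => one_mul (v k)

/-- multiplication by a nonzero rational function as a linear equivalence -/
private noncomputable def ratScaleEquiv (r : ℕ) (f : RatFunc ℂ) (hf : f ≠ 0) :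
    (Fin r → RatFunc ℂ) ≃ₗ[ℂ] (Fin r → RatFunc ℂ) :=
  LinearEquiv.ofLinear (ratScale r f) (ratScale r f⁻¹)
    (by rw [← ratScale_mul, mul_inv_cancel₀ hf, ratScale_one])
    (by rw [← ratScale_mul, inv_mul_cancel₀ hf, ratScale_one])

private lemma map_ratScaleEquiv (r : ℕ) (f : RatFunc ℂ) (hf : f ≠ 0)
    (U : Submodule ℂ (Fin r → RatFunc ℂ)) :
    U.map (ratScaleEquiv r f hf : (Fin r → RatFunc ℂ) →ₗ[ℂ] (Fin r → RatFunc ℂ))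
      = scaleSub r f U := rfl

private lemma scaleSub_scaleSub (r : ℕ) (f g : RatFunc ℂ) (U : Submodule ℂ (Fin r → RatFunc ℂ)) :
    scaleSub r f (scaleSub r g U) = scaleSub r (f * g) U := by
  simp [scaleSub, ratScale_mul, Submodule.map_comp]

private lemma scaleSub_one (r : ℕ) (U : Submodule ℂ (Fin r → RatFunc ℂ)) :
    scaleSub r 1 U = U := by
  simp [scaleSub, ratScale_one]

private lemma polyToRat_apply (r : ℕ) (u : Fin r → Polynomial ℂ) (k : Fin r) :
    polyToRat r u k = algebraMap (Polynomial ℂ) (RatFunc ℂ) (u k) := rfl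

private lemma polyToRat_injective (r : ℕ) : Function.Injective (polyToRat r) := by
  intro u v h
  funext k
  exact RatFunc.algebraMap_injective ℂ (congrFun h k)

private lemma scaleSub_poly_le (r : ℕ) (c : Polynomial ℂ) :
    scaleSub r (algebraMap (Polynomial ℂ) (RatFunc ℂ) c) (polySubmodule r) ≤ polySubmodule r := by
  rintro x ⟨y, ⟨u, rfl⟩, rfl⟩
  refine ⟨fun k => c * u k, funext fun k => ?_⟩
  simp [polyToRat_apply, ratScale_apply, map_mul]

private lemma scaleSub_mul_le (r : ℕ) (a c : Polynomial ℂ) :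
    scaleSub r (algebraMap (Polynomial ℂ) (RatFunc ℂ) (a * c)) (polySubmodule r)
      ≤ scaleSub r (algebraMap (Polynomial ℂ) (RatFunc ℂ) a) (polySubmodule r) := by
  rw [map_mul, ← scaleSub_scaleSub]
  exact Submodule.map_mono (scaleSub_poly_le r c)

/-- transporting a quotient of nested submodules along a linear equivalence -/
private noncomputable def quotEquivOfEquiv {M N : Type*} [AddCommGroup M] [Module ℂ M]
    [AddCommGroup N] [Module ℂ N] (e : M ≃ₗ[ℂ] N) (C B : Submodule ℂ M)
    (C' B' : Submodule ℂ N) (hB : B.map (e : M →ₗ[ℂ] N) = B')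
    (hC : C.map (e : M →ₗ[ℂ] N) = C') :
    (↥B ⧸ Submodule.comap B.subtype C) ≃ₗ[ℂ] (↥B' ⧸ Submodule.comap B'.subtype C') := by
  subst hB hC
  refine Submodule.Quotient.equiv _ _ (e.submoduleMap B) ?_
  ext x
  simp only [Submodule.mem_map, Submodule.mem_comap]
  constructor
  · rintro ⟨y, hy, rfl⟩
    exact ⟨y.1, hy, rfl⟩
  · rintro ⟨z, hz, hzx⟩
    have hzB : z ∈ B := by
      obtain ⟨w, hwB, hwx⟩ := x.2
      have hzw : z = w := e.injective (by exact hzx.trans hwx.symm)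
      exact hzw ▸ hwB
    exact ⟨⟨z, hzB⟩, hz, Subtype.ext (by exact hzx)⟩

end VdimAux

section VdimAux2

open Module Submodule

/-- The quotient `P^r ⧸ c·P^r` is `r` copies of `ℂ[X] ⧸ (c)`. -/
private noncomputable def polyQuotEquivPi (r : ℕ) (c : Polynomial ℂ) :
    (↥(polySubmodule r) ⧸ Submodule.comap (polySubmodule r).subtype
        (scaleSub r (algebraMap (Polynomial ℂ) (RatFunc ℂ) c) (polySubmodule r)))
      ≃ₗ[ℂ] (Fin r → AdjoinRoot c) := by
  set N : Submodule ℂ (Fin r → Polynomial ℂ) :=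
    Submodule.pi Set.univ (fun _ => (Ideal.span {c}).restrictScalars ℂ) with hNdef
  let e₀ : (Fin r → Polynomial ℂ) ≃ₗ[ℂ] ↥(polySubmodule r) :=
    LinearEquiv.ofInjective (polyToRat r) (polyToRat_injective r)
  have h : N.map (e₀ : (Fin r → Polynomial ℂ) →ₗ[ℂ] ↥(polySubmodule r))
      = Submodule.comap (polySubmodule r).subtype
        (scaleSub r (algebraMap (Polynomial ℂ) (RatFunc ℂ) c) (polySubmodule r)) := by
    ext x
    simp only [hNdef, Submodule.mem_map, Submodule.mem_comap, Submodule.mem_pi,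
      Submodule.restrictScalars_mem, Ideal.mem_span_singleton, Set.mem_univ, forall_true_left]
    constructor
    · rintro ⟨u, hu, rfl⟩
      choose w hw using hu
      refine ⟨polyToRat r w, ⟨w, rfl⟩, funext fun k => ?_⟩
      show algebraMap (Polynomial ℂ) (RatFunc ℂ) c * polyToRat r w k = polyToRat r u k
      rw [polyToRat_apply, polyToRat_apply, ← map_mul, ← hw k]
    · rintro ⟨y, ⟨v, rfl⟩, hy⟩
      have hy' : ratScale r (algebraMap (Polynomial ℂ) (RatFunc ℂ) c) (polyToRat r v)
          = (x : Fin r → RatFunc ℂ) := hy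
      refine ⟨fun k => c * v k, fun k => ⟨v k, rfl⟩, Subtype.ext ?_⟩
      show polyToRat r (fun k => c * v k) = (x : Fin r → RatFunc ℂ)
      funext k
      rw [← hy']
      show algebraMap (Polynomial ℂ) (RatFunc ℂ) (c * v k)
        = algebraMap (Polynomial ℂ) (RatFunc ℂ) c * polyToRat r v k
      rw [polyToRat_apply, map_mul]
  exact (Submodule.Quotient.equiv N _ e₀ h).symm.trans
    ((Submodule.quotientPi _).trans
      (LinearEquiv.piCongrRight fun _ =>
        Submodule.Quotient.restrictScalarsEquiv ℂ (Ideal.span {c})))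

private lemma adjoinRoot_fd (c : Polynomial ℂ) (hc : c ≠ 0) :
    FiniteDimensional ℂ (AdjoinRoot c) :=
  Module.Finite.of_basis (AdjoinRoot.powerBasis hc).basis

private lemma polyQuot_finite (r : ℕ) (c : Polynomial ℂ) (hc : c ≠ 0) :
    FiniteDimensional ℂ (↥(polySubmodule r) ⧸ Submodule.comap (polySubmodule r).subtype
      (scaleSub r (algebraMap (Polynomial ℂ) (RatFunc ℂ) c) (polySubmodule r))) := by
  have := adjoinRoot_fd c hc
  exact (polyQuotEquivPi r c).symm.finiteDimensional

private lemma polyQuot_finrank (r : ℕ) (c : Polynomial ℂ) (hc : c ≠ 0) :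
    finrank ℂ (↥(polySubmodule r) ⧸ Submodule.comap (polySubmodule r).subtype
      (scaleSub r (algebraMap (Polynomial ℂ) (RatFunc ℂ) c) (polySubmodule r)))
      = r * c.natDegree := by
  have := adjoinRoot_fd c hc
  have h1 : finrank ℂ (AdjoinRoot c) = c.natDegree := by
    rw [(AdjoinRoot.powerBasis hc).finrank]; rfl
  rw [LinearEquiv.finrank_eq (polyQuotEquivPi r c), Module.finrank_pi_fintype, h1]
  simp [Finset.sum_const, Finset.card_univ, mul_comm]

private lemma finrank_scale_quot (r : ℕ) (a c : Polynomial ℂ) (ha : a ≠ 0) (hc : c ≠ 0) :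
    finrank ℂ (↥(scaleSub r (algebraMap (Polynomial ℂ) (RatFunc ℂ) a) (polySubmodule r)) ⧸
      Submodule.comap
        (scaleSub r (algebraMap (Polynomial ℂ) (RatFunc ℂ) a) (polySubmodule r)).subtype
        (scaleSub r (algebraMap (Polynomial ℂ) (RatFunc ℂ) (a * c)) (polySubmodule r)))
      = r * c.natDegree := by
  have hA : algebraMap (Polynomial ℂ) (RatFunc ℂ) a ≠ 0 := RatFunc.algebraMap_ne_zero ha
  have e := quotEquivOfEquiv (ratScaleEquiv r _ hA)
    (scaleSub r (algebraMap (Polynomial ℂ) (RatFunc ℂ) c) (polySubmodule r)) (polySubmodule r)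
    (scaleSub r (algebraMap (Polynomial ℂ) (RatFunc ℂ) (a * c)) (polySubmodule r))
    (scaleSub r (algebraMap (Polynomial ℂ) (RatFunc ℂ) a) (polySubmodule r))
    (map_ratScaleEquiv r _ hA _)
    (by rw [map_ratScaleEquiv, scaleSub_scaleSub, ← map_mul])
  rw [← e.finrank_eq]
  exact polyQuot_finrank r c hc

private lemma findim_sub {M : Type*} [AddCommGroup M] [Module ℂ M]
    (C W V : Submodule ℂ M) (hCW : C ≤ W) (hWV : W ≤ V)
    [FiniteDimensional ℂ (↥V ⧸ Submodule.comap V.subtype C)] :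
    FiniteDimensional ℂ (↥W ⧸ Submodule.comap W.subtype C) := by
  let f := Submodule.mapQ (Submodule.comap W.subtype C) (Submodule.comap V.subtype C)
    (Submodule.inclusion hWV) (fun x hx => hx)
  have hker : LinearMap.ker f = ⊥ := by
    rw [eq_bot_iff]
    rintro x hx
    obtain ⟨y, rfl⟩ := Submodule.Quotient.mk_surjective _ x
    have h0 : f (Submodule.Quotient.mk y) = 0 := hx
    rw [show f (Submodule.Quotient.mk y) = Submodule.Quotient.mk (Submodule.inclusion hWV y) from rfl, Submodule.Quotient.mk_eq_zero] at h0
    rw [Submodule.mem_bot, Submodule.Quotient.mk_eq_zero]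
    exact h0
  exact FiniteDimensional.of_injective f (LinearMap.ker_eq_bot.mp hker)

private lemma finrank_quot_add {M : Type*} [AddCommGroup M] [Module ℂ M]
    (C B W : Submodule ℂ M) (hCB : C ≤ B) (hBW : B ≤ W)
    [FiniteDimensional ℂ (↥W ⧸ Submodule.comap W.subtype C)] :
    finrank ℂ (↥W ⧸ Submodule.comap W.subtype C)
      = finrank ℂ (↥W ⧸ Submodule.comap W.subtype B)
        + finrank ℂ (↥B ⧸ Submodule.comap B.subtype C) := by
  set C' := Submodule.comap W.subtype C with hC'
  set B' := Submodule.comap W.subtype B with hB'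
  have hC'B' : C' ≤ B' := fun x hx => hCB hx
  have e1 : ((↥W ⧸ C') ⧸ (B'.map C'.mkQ)) ≃ₗ[ℂ] (↥W ⧸ B') :=
    Submodule.quotientQuotientEquivQuotient C' B' hC'B'
  have hker : LinearMap.ker (C'.mkQ ∘ₗ B'.subtype) = Submodule.comap B'.subtype C' := by
    rw [LinearMap.ker_comp, Submodule.ker_mkQ]
  have hrg : LinearMap.range (C'.mkQ ∘ₗ B'.subtype) = B'.map C'.mkQ := by
    rw [LinearMap.range_comp, Submodule.range_subtype]
  have e2 : ↥(B'.map C'.mkQ) ≃ₗ[ℂ] (↥B' ⧸ Submodule.comap B'.subtype C') :=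
    (LinearEquiv.ofEq _ _ hrg.symm).trans
      ((LinearMap.quotKerEquivRange (C'.mkQ ∘ₗ B'.subtype)).symm.trans
        (Submodule.quotEquivOfEq _ _ hker))
  have h3 : (Submodule.comap B'.subtype C').map
      ((Submodule.comapSubtypeEquivOfLe hBW : ↥B' ≃ₗ[ℂ] ↥B) : ↥B' →ₗ[ℂ] ↥B)
      = Submodule.comap B.subtype C := by
    ext x
    simp only [Submodule.mem_map, Submodule.mem_comap]
    constructor
    · rintro ⟨y, hy, rfl⟩
      exact hy
    · intro hx
      exact ⟨⟨⟨x.1, hBW x.2⟩, x.2⟩, hx, Subtype.ext rfl⟩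
  have e3 : (↥B' ⧸ Submodule.comap B'.subtype C') ≃ₗ[ℂ] (↥B ⧸ Submodule.comap B.subtype C) :=
    Submodule.Quotient.equiv _ _ (Submodule.comapSubtypeEquivOfLe hBW) h3
  have := Submodule.finrank_quotient_add_finrank (B'.map C'.mkQ)
  rw [e1.finrank_eq, (e2.trans e3).finrank_eq] at this
  omega

end VdimAux2

/-- if `W ⊆ q⁻¹·P^r` and `p₁·P^r ⊆ W`, `p₂·P^r ⊆ W` for nonzero
polynomials `p₁, p₂`, then both quotients `W ⧸ pᵢ·P^r` are finite-dimensional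
and `finrank (W ⧸ p₁·P^r) − r·deg p₁ = finrank (W ⧸ p₂·P^r) − r·deg p₂`;
the virtual dimension of `W` does not depend on the choice of `p`. -/
theorem vdim_independent_of_p (r : ℕ) (hr : 1 ≤ r)
    (W : Submodule ℂ (Fin r → RatFunc ℂ)) (q p₁ p₂ : Polynomial ℂ)
    (hq : q ≠ 0) (hp₁ : p₁ ≠ 0) (hp₂ : p₂ ≠ 0)
    (hWq : W ≤ scaleSub r (algebraMap (Polynomial ℂ) (RatFunc ℂ) q)⁻¹
      (polySubmodule r))
    (hp₁W : scaleSub r (algebraMap (Polynomial ℂ) (RatFunc ℂ) p₁)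
      (polySubmodule r) ≤ W)
    (hp₂W : scaleSub r (algebraMap (Polynomial ℂ) (RatFunc ℂ) p₂)
      (polySubmodule r) ≤ W) :
    letI p₁P : Submodule ℂ (Fin r → RatFunc ℂ) :=
      scaleSub r (algebraMap (Polynomial ℂ) (RatFunc ℂ) p₁) (polySubmodule r)
    letI p₂P : Submodule ℂ (Fin r → RatFunc ℂ) :=
      scaleSub r (algebraMap (Polynomial ℂ) (RatFunc ℂ) p₂) (polySubmodule r)
    FiniteDimensional ℂ (↥W ⧸ Submodule.comap W.subtype p₁P) ∧
    FiniteDimensional ℂ (↥W ⧸ Submodule.comap W.subtype p₂P) ∧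
    (Module.finrank ℂ (↥W ⧸ Submodule.comap W.subtype p₁P) : ℤ)
        - (r : ℤ) * p₁.natDegree
      = (Module.finrank ℂ (↥W ⧸ Submodule.comap W.subtype p₂P) : ℤ)
        - (r : ℤ) * p₂.natDegree := by
  have hAq : algebraMap (Polynomial ℂ) (RatFunc ℂ) q ≠ 0 := RatFunc.algebraMap_ne_zero hq
  -- finite-dimensionality of `W ⧸ p·P^r` for any nonzero `p` with `p·P^r ≤ W`
  have key : ∀ (p : Polynomial ℂ), p ≠ 0 →
      scaleSub r (algebraMap (Polynomial ℂ) (RatFunc ℂ) p) (polySubmodule r) ≤ W →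
      FiniteDimensional ℂ (↥W ⧸ Submodule.comap W.subtype
        (scaleSub r (algebraMap (Polynomial ℂ) (RatFunc ℂ) p) (polySubmodule r))) := by
    intro p hp hpW
    have e := quotEquivOfEquiv (ratScaleEquiv r _ (inv_ne_zero hAq))
      (scaleSub r (algebraMap (Polynomial ℂ) (RatFunc ℂ) (q * p)) (polySubmodule r))
      (polySubmodule r)
      (scaleSub r (algebraMap (Polynomial ℂ) (RatFunc ℂ) p) (polySubmodule r))
      (scaleSub r (algebraMap (Polynomial ℂ) (RatFunc ℂ) q)⁻¹ (polySubmodule r))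
      (map_ratScaleEquiv r _ (inv_ne_zero hAq) _)
      (by
        rw [map_ratScaleEquiv, scaleSub_scaleSub, map_mul,
          inv_mul_cancel_left₀ hAq])
    have fd0 : FiniteDimensional ℂ (↥(polySubmodule r) ⧸ Submodule.comap
        (polySubmodule r).subtype (scaleSub r
          (algebraMap (Polynomial ℂ) (RatFunc ℂ) (q * p)) (polySubmodule r))) :=
      polyQuot_finite r (q * p) (mul_ne_zero hq hp)
    have fdV := e.finiteDimensional
    exact findim_sub _ W _ hpW hWq
  have fd1 := key p₁ hp₁ hp₁W
  have fd2 := key p₂ hp₂ hp₂W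
  have hpp1 : scaleSub r (algebraMap (Polynomial ℂ) (RatFunc ℂ) (p₁ * p₂)) (polySubmodule r)
      ≤ scaleSub r (algebraMap (Polynomial ℂ) (RatFunc ℂ) p₁) (polySubmodule r) :=
    scaleSub_mul_le r p₁ p₂
  have hpp2 : scaleSub r (algebraMap (Polynomial ℂ) (RatFunc ℂ) (p₁ * p₂)) (polySubmodule r)
      ≤ scaleSub r (algebraMap (Polynomial ℂ) (RatFunc ℂ) p₂) (polySubmodule r) := by
    rw [mul_comm]; exact scaleSub_mul_le r p₂ p₁
  have fdpp := key (p₁ * p₂) (mul_ne_zero hp₁ hp₂) (le_trans hpp1 hp₁W)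
  have add1 := finrank_quot_add
    (scaleSub r (algebraMap (Polynomial ℂ) (RatFunc ℂ) (p₁ * p₂)) (polySubmodule r))
    (scaleSub r (algebraMap (Polynomial ℂ) (RatFunc ℂ) p₁) (polySubmodule r))
    W hpp1 hp₁W
  have add2 := finrank_quot_add
    (scaleSub r (algebraMap (Polynomial ℂ) (RatFunc ℂ) (p₁ * p₂)) (polySubmodule r))
    (scaleSub r (algebraMap (Polynomial ℂ) (RatFunc ℂ) p₂) (polySubmodule r))
    W hpp2 hp₂W
  have c1 := finrank_scale_quot r p₁ p₂ hp₁ hp₂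
  have c2 : Module.finrank ℂ
      (↥(scaleSub r (algebraMap (Polynomial ℂ) (RatFunc ℂ) p₂) (polySubmodule r)) ⧸
        Submodule.comap
          (scaleSub r (algebraMap (Polynomial ℂ) (RatFunc ℂ) p₂) (polySubmodule r)).subtype
          (scaleSub r (algebraMap (Polynomial ℂ) (RatFunc ℂ) (p₁ * p₂)) (polySubmodule r)))
      = r * p₁.natDegree := by
    rw [mul_comm p₁ p₂]
    exact finrank_scale_quot r p₂ p₁ hp₂ hp₁
  rw [c1] at add1
  rw [c2] at add2
  exact ⟨fd1, fd2, by omega⟩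
end

section
/- Fix integers r ≥ 1, d ≥ 1, S ≥ 1, a point λ ∈ ℂ and coefficients a : Fin (d*r) → Fin r → Fin S → ℂ; set φ i γ := Σ_{s ∈ Fin S} (a i γ s)·X^s ∈ Polynomial ℂ. For t : Fin r → ℂ let M(t) be the (d·r)×(d·r) complex matrix with rows indexed by (j,γ) ∈ Fin d × Fin r and columns indexed by i ∈ Fin (d*r), with entries M(t)_{(j,γ),i} := Σ_{s ∈ Fin S} a i γ s * iteratedDeriv s (fun z => z^j * Complex.exp ((t γ)*z)) λ. Then det M(t) = Complex.exp (d*λ*(Σ_{γ ∈ Fin r} t γ)) * det of the matrix whose ((j,γ),i) entry is Polynomial.eval (t γ) ((T_λ)^[j] (φ i γ)). In particular, the function t ↦ Complex.exp (−d*λ*Σ_γ t γ) * det M(t) is the evaluation of a multivariate polynomial in the r variables t γ. -/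
open Polynomial

/-- The ℂ-linear operator `T_λ` on `ℂ[X]`, `T_λ(φ) = φ' + λ•φ`. -/
noncomputable def Tlam (l : ℂ) : Polynomial ℂ →ₗ[ℂ] Polynomial ℂ :=
  (Polynomial.derivative : Polynomial ℂ →ₗ[ℂ] Polynomial ℂ) + l • LinearMap.id


lemma Tlam_apply (u : ℂ) (P : Polynomial ℂ) :
    Tlam u P = Polynomial.derivative P + u • P := by
  simp [Tlam]

lemma deriv_poly_mul_exp (t : ℂ) (P : Polynomial ℂ) :
    deriv (fun z : ℂ => P.eval z * Complex.exp (t * z)) =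
      fun z => (Tlam t P).eval z * Complex.exp (t * z) := by
  funext z
  have h1 : HasDerivAt (fun z : ℂ => P.eval z) (P.derivative.eval z) z := P.hasDerivAt z
  have h2 : HasDerivAt (fun z : ℂ => Complex.exp (t * z)) (Complex.exp (t * z) * t) z := by
    simpa using ((hasDerivAt_id z).const_mul t).cexp
  rw [HasDerivAt.deriv (f := fun z : ℂ => P.eval z * Complex.exp (t * z)) (h1.mul h2), Tlam_apply]
  simp only [Polynomial.eval_add, Polynomial.eval_smul, smul_eq_mul]
  ring

lemma iteratedDeriv_poly_mul_exp (t : ℂ) (s : ℕ) (P : Polynomial ℂ) :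
    iteratedDeriv s (fun z : ℂ => P.eval z * Complex.exp (t * z)) =
      fun z => ((Tlam t ^ s) P).eval z * Complex.exp (t * z) := by
  induction s generalizing P with
  | zero => simp
  | succ s ih =>
    rw [iteratedDeriv_succ', deriv_poly_mul_exp, ih (Tlam t P)]
    rw [pow_succ, Module.End.mul_apply]

lemma Tlam_pow_apply (u : ℂ) (s : ℕ) (P : Polynomial ℂ) :
    (Tlam u ^ s) P = ∑ k ∈ Finset.range (s + 1),
      ((s.choose k : ℂ) * u ^ (s - k)) • (Polynomial.derivative^[k] P) := by
  have hc : Commute (Polynomial.derivative : Polynomial ℂ →ₗ[ℂ] Polynomial ℂ)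
      (u • LinearMap.id) := by
    rw [Module.End.one_eq_id.symm]
    exact (Commute.one_right _).smul_right u
  have hpow := hc.add_pow s
  rw [Tlam, hpow]
  rw [LinearMap.sum_apply]
  apply Finset.sum_congr rfl
  intro k hk
  rw [_root_.smul_pow]
  simp only [Module.End.mul_apply, LinearMap.smul_apply, Module.End.one_eq_id, LinearMap.id_apply,
    Module.End.natCast_apply, Module.End.pow_apply, Module.End.id_pow]
  rw [mul_smul, ← Nat.cast_smul_eq_nsmul ℂ]
  rw [Polynomial.iterate_derivative_smul, Polynomial.iterate_derivative_smul, smul_comm]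

lemma eval_Tlam_pow_X_pow (u v : ℂ) (s j : ℕ) :
    ((Tlam u ^ s) ((X : Polynomial ℂ) ^ j)).eval v =
      ∑ k ∈ Finset.range (s + 1),
        (s.choose k : ℂ) * (j.descFactorial k : ℂ) * u ^ (s - k) * v ^ (j - k) := by
  rw [Tlam_pow_apply, Polynomial.eval_finset_sum]
  apply Finset.sum_congr rfl
  intro k _
  rw [Polynomial.iterate_derivative_X_pow_eq_smul]
  simp only [Polynomial.eval_smul, smul_eq_mul, Polynomial.eval_pow, Polynomial.eval_X,
    nsmul_eq_mul, Polynomial.eval_mul, Polynomial.eval_natCast]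
  ring

lemma key_symm (u v : ℂ) (s j : ℕ) :
    ((Tlam u ^ s) ((X : Polynomial ℂ) ^ j)).eval v =
      ((Tlam v ^ j) ((X : Polynomial ℂ) ^ s)).eval u := by
  rw [eval_Tlam_pow_X_pow, eval_Tlam_pow_X_pow]
  have hL : ∑ k ∈ Finset.range (s + 1),
        (s.choose k : ℂ) * (j.descFactorial k : ℂ) * u ^ (s - k) * v ^ (j - k)
      = ∑ k ∈ Finset.range (s + j + 1),
        (s.choose k : ℂ) * (j.descFactorial k : ℂ) * u ^ (s - k) * v ^ (j - k) := by
    apply Finset.sum_subset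
    · exact Finset.range_subset_range.mpr (by omega)
    · intro k _ hk
      have : s < k := by simpa using hk
      simp [Nat.choose_eq_zero_of_lt this]
  have hR : ∑ k ∈ Finset.range (j + 1),
        (j.choose k : ℂ) * (s.descFactorial k : ℂ) * v ^ (j - k) * u ^ (s - k)
      = ∑ k ∈ Finset.range (s + j + 1),
        (j.choose k : ℂ) * (s.descFactorial k : ℂ) * v ^ (j - k) * u ^ (s - k) := by
    apply Finset.sum_subset
    · exact Finset.range_subset_range.mpr (by omega)
    · intro k _ hk
      have : j < k := by simpa using hk
      simp [Nat.choose_eq_zero_of_lt this]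
  rw [hL, hR]
  apply Finset.sum_congr rfl
  intro k _
  have hnat : s.choose k * j.descFactorial k = j.choose k * s.descFactorial k := by
    rw [Nat.descFactorial_eq_factorial_mul_choose, Nat.descFactorial_eq_factorial_mul_choose]
    ring
  have : (s.choose k : ℂ) * (j.descFactorial k : ℂ) = (j.choose k : ℂ) * (s.descFactorial k : ℂ) := by
    exact_mod_cast congrArg (Nat.cast (R := ℂ)) hnat
  rw [this]
  ring

lemma eval_aeval_X {r : ℕ} (t : Fin r → ℂ) (γ : Fin r) (P : Polynomial ℂ) :
    MvPolynomial.eval t (Polynomial.aeval (MvPolynomial.X γ : MvPolynomial (Fin r) ℂ) P) =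
      Polynomial.eval (t γ) P := by
  induction P using Polynomial.induction_on' with
  | add p q hp hq => simp [hp, hq]
  | monomial n c => simp [Polynomial.aeval_monomial, Polynomial.eval_monomial]

/-- the determinant of the matrix
`M(t)_{(j,γ),i} = Σ_s a i γ s · d^s/dz^s (z^j e^{t_γ z})|_{z=λ}` equals
`exp(d·λ·Σ_γ t_γ)` times the determinant of the matrix with entries
`((T_λ)^j (φ i γ)).eval (t_γ)`; in particular
`t ↦ exp(−d·λ·Σ_γ t_γ) · det M(t)` is the evaluation of a multivariate
polynomial in the `r` variables `t_γ`. -/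
theorem det_onePoint_tau_polynomial (r d S : ℕ) (hr : 1 ≤ r) (hd : 1 ≤ d)
    (hS : 1 ≤ S) (l : ℂ) (a : Fin (d * r) → Fin r → Fin S → ℂ)
    (φ : Fin (d * r) → Fin r → Polynomial ℂ)
    (hφ : ∀ i γ, φ i γ = ∑ s : Fin S, a i γ s • (X : Polynomial ℂ) ^ (s : ℕ))
    (M : (Fin r → ℂ) → Matrix (Fin d × Fin r) (Fin d × Fin r) ℂ)
    (hM : ∀ (t : Fin r → ℂ) (p q : Fin d × Fin r),
      M t p q = ∑ s : Fin S, a (finProdFinEquiv q) p.2 s *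
        iteratedDeriv (s : ℕ)
          (fun z : ℂ => z ^ (p.1 : ℕ) * Complex.exp (t p.2 * z)) l) :
    (∀ t : Fin r → ℂ,
      (M t).det = Complex.exp ((d : ℂ) * l * ∑ γ : Fin r, t γ) *
        (Matrix.of fun p q : Fin d × Fin r =>
          Polynomial.eval (t p.2)
            ((Tlam l ^ (p.1 : ℕ)) (φ (finProdFinEquiv q) p.2))).det) ∧
    ∃ F : MvPolynomial (Fin r) ℂ, ∀ t : Fin r → ℂ,
      Complex.exp (-(d : ℂ) * l * ∑ γ : Fin r, t γ) * (M t).det =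
        MvPolynomial.eval t F := by
  have hentry : ∀ (t : Fin r → ℂ) (p q : Fin d × Fin r),
      M t p q = Complex.exp (t p.2 * l) *
        Polynomial.eval (t p.2) ((Tlam l ^ (p.1 : ℕ)) (φ (finProdFinEquiv q) p.2)) := by
    intro t p q
    rw [hM]
    have hfun : (fun z : ℂ => z ^ (p.1 : ℕ) * Complex.exp (t p.2 * z)) =
        (fun z : ℂ => ((X : Polynomial ℂ) ^ (p.1 : ℕ)).eval z * Complex.exp (t p.2 * z)) := by
      funext z; simp
    have hstep : ∀ s : Fin S,
        iteratedDeriv (s : ℕ) (fun z : ℂ => z ^ (p.1 : ℕ) * Complex.exp (t p.2 * z)) l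
          = Polynomial.eval (t p.2) ((Tlam l ^ (p.1 : ℕ)) ((X : Polynomial ℂ) ^ (s : ℕ)))
            * Complex.exp (t p.2 * l) := by
      intro s
      rw [hfun, iteratedDeriv_poly_mul_exp]
      rw [key_symm]
    simp only [hstep]
    rw [hφ, map_sum, Polynomial.eval_finset_sum, Finset.mul_sum]
    apply Finset.sum_congr rfl
    intro s _
    rw [map_smul, Polynomial.eval_smul, smul_eq_mul]
    ring
  have h1 : ∀ t : Fin r → ℂ,
      (M t).det = Complex.exp ((d : ℂ) * l * ∑ γ : Fin r, t γ) *
        (Matrix.of fun p q : Fin d × Fin r =>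
          Polynomial.eval (t p.2)
            ((Tlam l ^ (p.1 : ℕ)) (φ (finProdFinEquiv q) p.2))).det := by
    intro t
    have : M t = Matrix.of fun p q : Fin d × Fin r =>
        Complex.exp (t p.2 * l) *
          (Matrix.of fun p q : Fin d × Fin r =>
            Polynomial.eval (t p.2)
              ((Tlam l ^ (p.1 : ℕ)) (φ (finProdFinEquiv q) p.2))) p q := by
      ext p q; exact hentry t p q
    rw [this, Matrix.det_mul_column]
    congr 1
    rw [← Complex.exp_sum]
    congr 1
    rw [Fintype.sum_prod_type]
    simp only [Finset.sum_const, Finset.card_univ, Fintype.card_fin, nsmul_eq_mul,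
      ← Finset.sum_mul, Finset.mul_sum]
    rw [Finset.sum_mul, Finset.mul_sum]
    exact Finset.sum_congr rfl fun γ _ => by ring
  refine ⟨h1, ?_⟩
  refine ⟨(Matrix.of fun p q : Fin d × Fin r =>
      Polynomial.aeval (MvPolynomial.X p.2 : MvPolynomial (Fin r) ℂ)
        ((Tlam l ^ (p.1 : ℕ)) (φ (finProdFinEquiv q) p.2))).det, ?_⟩
  intro t
  rw [h1 t, ← mul_assoc, ← Complex.exp_add]
  have : -(d : ℂ) * l * ∑ γ : Fin r, t γ + (d : ℂ) * l * ∑ γ : Fin r, t γ = 0 := by ring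
  rw [this, Complex.exp_zero, one_mul]
  rw [RingHom.map_det]
  congr 1
  ext p q
  simp only [RingHom.mapMatrix_apply, Matrix.map_apply, Matrix.of_apply]
  exact (eval_aeval_X t p.2 _).symm
end
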